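/- For every nonzero state ψ := c₀φ₀ + c₁φ₁ + c₂φ₂ + c₃φ₃ in the symmetric sector of three qubits, there exist X ∈ SU(2), a real phase γ, and complex coefficients c₀', c₁', c₂' with c₀' and c₂' real, such that (X⊗X⊗X)ψ = e^{iγ}(c₀'φ₀ + c₁'φ₁ + c₂'φ₂). That is, up to a local symmetric special unitary transformation and a global phase, every symmetric three-qubit state can be put in a form with c₃ = 0 and c₀, c₂ real. -/

import Mathlib

open Matrix Complex

noncomputable section

/-- Index type for three qubits: `(ℂ²)^{⊗3} ≅ ℂ⁸` with basis `|jkl⟩`. -/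
abbrev Q3 := Fin 2 × Fin 2 × Fin 2

/-- Pauli matrix σx. -/
def sx : Matrix (Fin 2) (Fin 2) ℂ := !![0, 1; 1, 0]
/-- Pauli matrix σy. -/
def sy : Matrix (Fin 2) (Fin 2) ℂ := !![0, I; -I, 0]
/-- Pauli matrix σz. -/
def sz : Matrix (Fin 2) (Fin 2) ℂ := !![1, 0; 0, -1]

/-- Tensor (Kronecker) product of three 2×2 matrices, as an 8×8 matrix. -/
def tens3 (A B C : Matrix (Fin 2) (Fin 2) ℂ) : Matrix Q3 Q3 ℂ :=
  fun p q => A p.1 q.1 * B p.2.1 q.2.1 * C p.2.2 q.2.2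

/-- Computational basis vector `|jkl⟩`. -/
def ket (j k l : Fin 2) : Q3 → ℂ := fun p => if p = (j, k, l) then 1 else 0

/-- φ₀ = |000⟩. -/
def phi0 : Q3 → ℂ := ket 0 0 0
/-- φ₁ = |100⟩+|010⟩+|001⟩. -/
def phi1 : Q3 → ℂ := ket 1 0 0 + ket 0 1 0 + ket 0 0 1
/-- φ₂ = |110⟩+|011⟩+|101⟩. -/
def phi2 : Q3 → ℂ := ket 1 1 0 + ket 0 1 1 + ket 1 0 1
/-- φ₃ = |111⟩. -/
def phi3 : Q3 → ℂ := ket 1 1 1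

open ComplexConjugate

lemma tens3_mul (A B : Matrix (Fin 2) (Fin 2) ℂ) :
    tens3 (A * B) (A * B) (A * B) = tens3 A A A * tens3 B B B := by
  funext p q
  simp [tens3, Matrix.mul_apply, Fintype.sum_prod_type, Fin.sum_univ_two]
  ring

lemma key (X : Matrix (Fin 2) (Fin 2) ℂ) (c0 c1 c2 c3 : ℂ) :
    (tens3 X X X).mulVec (c0 • phi0 + c1 • phi1 + c2 • phi2 + c3 • phi3) =
      (X 0 0^3*c0 + 3*X 0 0^2*X 0 1*c1 + 3*X 0 0*X 0 1^2*c2 + X 0 1^3*c3) • phi0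
    + (X 0 0^2*X 1 0*c0 + (X 0 0^2*X 1 1 + 2*X 0 0*X 0 1*X 1 0)*c1
        + (2*X 0 0*X 0 1*X 1 1 + X 0 1^2*X 1 0)*c2 + X 0 1^2*X 1 1*c3) • phi1
    + (X 0 0*X 1 0^2*c0 + (2*X 0 0*X 1 0*X 1 1 + X 0 1*X 1 0^2)*c1
        + (X 0 0*X 1 1^2 + 2*X 0 1*X 1 0*X 1 1)*c2 + X 0 1*X 1 1^2*c3) • phi2
    + (X 1 0^3*c0 + 3*X 1 0^2*X 1 1*c1 + 3*X 1 0*X 1 1^2*c2 + X 1 1^3*c3) • phi3 := by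
  funext ⟨j,k,l⟩
  fin_cases j <;> fin_cases k <;> fin_cases l <;>
    simp [tens3, mulVec, dotProduct, Fintype.sum_prod_type, Fin.sum_univ_two,
      phi0, phi1, phi2, phi3, ket, Prod.ext_iff] <;> ring

open ComplexConjugate in
lemma mem_su2 (u v : ℂ) (h : u * conj u + v * conj v = 1) :
    !![conj v, -(conj u); u, v] ∈ Matrix.specialUnitaryGroup (Fin 2) ℂ := by
  rw [Matrix.mem_specialUnitaryGroup_iff]
  constructor
  · rw [Matrix.mem_unitaryGroup_iff]
    ext i j
    fin_cases i <;> fin_cases j <;>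
      simp [Matrix.mul_apply, Fin.sum_univ_two, Matrix.one_apply,
        Matrix.star_eq_conjTranspose, Matrix.conjTranspose_apply, Complex.star_def,
        -RCLike.star_def]
    all_goals first | exact h | linear_combination h | ring
  · simp [Matrix.det_fin_two]
    linear_combination h

open ComplexConjugate Polynomial in
lemma exists_root_su2 (c0 c1 c2 c3 : ℂ) :
    ∃ u v : ℂ, u * conj u + v * conj v = 1 ∧
      u^3*c0 + 3*u^2*v*c1 + 3*u*v^2*c2 + v^3*c3 = 0 := by
  by_cases hc0 : c0 = 0
  · exact ⟨1, 0, by simp, by simp [hc0]⟩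
  · obtain ⟨t, ht⟩ : ∃ t, (C c0 * X^3 + C (3*c1) * X^2 + C (3*c2) * X + C c3).IsRoot t := by
      apply IsAlgClosed.exists_root
      rw [Polynomial.degree_cubic hc0]
      exact (by decide : (3 : WithBot ℕ) ≠ 0)
    have heval : c0*t^3 + 3*c1*t^2 + 3*c2*t + c3 = 0 := by
      have := ht
      simp [Polynomial.IsRoot, Polynomial.eval_add, Polynomial.eval_mul] at this
      linear_combination this
    set r : ℝ := Real.sqrt (Complex.normSq t + 1) with hr
    have hn : (0:ℝ) < Complex.normSq t + 1 := by linarith [Complex.normSq_nonneg t]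
    have hrpos : 0 < r := Real.sqrt_pos.mpr hn
    have hrne : (r : ℂ) ≠ 0 := by
      simp only [ne_eq, Complex.ofReal_eq_zero]; exact ne_of_gt hrpos
    have hr2 : (r : ℂ)^2 = Complex.normSq t + 1 := by
      rw [← Complex.ofReal_pow, Real.sq_sqrt (le_of_lt hn)]
      push_cast
      ring
    refine ⟨t / r, 1 / r, ?_, ?_⟩
    · have h1 : t * conj t = (Complex.normSq t : ℂ) := Complex.mul_conj t
      rw [map_div₀, map_div₀, Complex.conj_ofReal, _root_.map_one]
      field_simp
      linear_combination h1 - hr2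
    · linear_combination (1/(r:ℂ))^3 * heval

lemma key2 (a b c d c0 c1 c2 c3 : ℂ) :
    (tens3 !![a,b;c,d] !![a,b;c,d] !![a,b;c,d]).mulVec
        (c0 • phi0 + c1 • phi1 + c2 • phi2 + c3 • phi3) =
      (a^3*c0 + 3*a^2*b*c1 + 3*a*b^2*c2 + b^3*c3) • phi0
    + (a^2*c*c0 + (a^2*d + 2*a*b*c)*c1 + (2*a*b*d + b^2*c)*c2 + b^2*d*c3) • phi1
    + (a*c^2*c0 + (2*a*c*d + b*c^2)*c1 + (a*d^2 + 2*b*c*d)*c2 + b*d^2*c3) • phi2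
    + (c^3*c0 + 3*c^2*d*c1 + 3*c*d^2*c2 + d^3*c3) • phi3 := by
  have h := key !![a,b;c,d] c0 c1 c2 c3
  simpa using h

lemma combo_congr (d0 d1 d2 d3 g0 g1 g2 : ℂ)
    (h0 : d0 = g0) (h1 : d1 = g1) (h2 : d2 = g2) (h3 : d3 = 0) :
    d0 • phi0 + d1 • phi1 + d2 • phi2 + d3 • phi3 =
      g0 • phi0 + g1 • phi1 + g2 • phi2 := by
  rw [h0, h1, h2, h3, zero_smul, add_zero]

lemma step2 (θ γ : ℝ) (x0 x1 x2 : ℂ)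
    (hγ : γ = 3*θ + Complex.arg x0) (hB : Complex.arg x2 = 4*θ + Complex.arg x0) :
    (tens3 !![Complex.exp (I*(θ:ℂ)), 0; 0, Complex.exp (-(I*(θ:ℂ)))]
           !![Complex.exp (I*(θ:ℂ)), 0; 0, Complex.exp (-(I*(θ:ℂ)))]
           !![Complex.exp (I*(θ:ℂ)), 0; 0, Complex.exp (-(I*(θ:ℂ)))]).mulVec
        (x0 • phi0 + x1 • phi1 + x2 • phi2 + (0:ℂ) • phi3) =
      Complex.exp (I*(γ:ℂ)) •
        ((‖x0‖ : ℂ) • phi0 + (Complex.exp (I*((θ:ℂ)-(γ:ℂ)))*x1) • phi1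
          + (‖x2‖ : ℂ) • phi2) := by
  rw [key2, smul_add, smul_add, smul_smul, smul_smul, smul_smul]
  have habs0 := Complex.norm_mul_exp_arg_mul_I x0
  have habs2 := Complex.norm_mul_exp_arg_mul_I x2
  have hE0 : Complex.exp (I*(γ:ℂ)) =
      Complex.exp (I*(θ:ℂ))^3 * Complex.exp ((Complex.arg x0 : ℂ)*I) := by
    rw [← Complex.exp_nat_mul, ← Complex.exp_add]
    congr 1
    rw [hγ]
    push_cast
    ring
  have hE1 : Complex.exp (I*(γ:ℂ)) * Complex.exp (I*((θ:ℂ)-(γ:ℂ))) =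
      Complex.exp (I*(θ:ℂ))^2 * Complex.exp (-(I*(θ:ℂ))) := by
    rw [← Complex.exp_nat_mul, ← Complex.exp_add, ← Complex.exp_add]
    congr 1
    push_cast
    ring
  have hE2 : Complex.exp (I*(γ:ℂ)) =
      Complex.exp (I*(θ:ℂ)) * Complex.exp (-(I*(θ:ℂ)))^2
        * Complex.exp ((Complex.arg x2 : ℂ)*I) := by
    rw [← Complex.exp_nat_mul, ← Complex.exp_add, ← Complex.exp_add]
    congr 1
    rw [hγ, hB]
    push_cast
    ring
  apply combo_congr
  · linear_combination -(‖x0‖ : ℂ) * hE0 - Complex.exp (I*(θ:ℂ))^3 * habs0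
  · linear_combination -x1 * hE1
  · linear_combination -(‖x2‖ : ℂ) * hE2
      - Complex.exp (I*(θ:ℂ)) * Complex.exp (-(I*(θ:ℂ)))^2 * habs2
  · ring

/-- every nonzero symmetric-sector state can be brought, by a local
symmetric special unitary transformation X⊗X⊗X (X ∈ SU(2)) and up to a global phase
e^{iγ}, to the form c₀'φ₀ + c₁'φ₁ + c₂'φ₂ with c₃ = 0 and c₀', c₂' real. -/
theorem statement19 (c0 c1 c2 c3 : ℂ)
    (hne : c0 • phi0 + c1 • phi1 + c2 • phi2 + c3 • phi3 ≠ 0) :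
    ∃ X ∈ Matrix.specialUnitaryGroup (Fin 2) ℂ,
      ∃ (γ : ℝ) (c0' c2' : ℝ) (c1' : ℂ),
        (tens3 X X X).mulVec (c0 • phi0 + c1 • phi1 + c2 • phi2 + c3 • phi3) =
          Complex.exp (Complex.I * (γ : ℂ)) •
            ((c0' : ℂ) • phi0 + c1' • phi1 + (c2' : ℂ) • phi2) := by
  obtain ⟨u, v, huv, hroot⟩ := exists_root_su2 c0 c1 c2 c3
  have hX0 := mem_su2 u v huv
  set e0 : ℂ := (conj v)^3*c0 + 3*(conj v)^2*(-(conj u))*c1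
      + 3*(conj v)*(-(conj u))^2*c2 + (-(conj u))^3*c3 with he0
  set e1 : ℂ := (conj v)^2*u*c0 + ((conj v)^2*v + 2*(conj v)*(-(conj u))*u)*c1
      + (2*(conj v)*(-(conj u))*v + (-(conj u))^2*u)*c2 + (-(conj u))^2*v*c3 with he1
  set e2 : ℂ := (conj v)*u^2*c0 + (2*(conj v)*u*v + (-(conj u))*u^2)*c1
      + ((conj v)*v^2 + 2*(-(conj u))*u*v)*c2 + (-(conj u))*v^2*c3 with he2
  set θ : ℝ := (Complex.arg e2 - Complex.arg e0)/4 with hθdef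
  set γ : ℝ := 3*θ + Complex.arg e0 with hγdef
  have hγ : γ = 3*θ + Complex.arg e0 := hγdef
  have hB : Complex.arg e2 = 4*θ + Complex.arg e0 := by rw [hθdef]; ring
  have h1 : (starRingEnd ℂ) (Complex.exp (-(I*(θ:ℂ)))) = Complex.exp (I*(θ:ℂ)) := by
    rw [← Complex.exp_conj]
    congr 1
    simp [Complex.conj_ofReal]
  have hD : !![Complex.exp (I*(θ:ℂ)), 0; 0, Complex.exp (-(I*(θ:ℂ)))] ∈
      Matrix.specialUnitaryGroup (Fin 2) ℂ := by
    have huv' : (0:ℂ) * conj 0 + Complex.exp (-(I*(θ:ℂ))) * conj (Complex.exp (-(I*(θ:ℂ)))) = 1 := by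
      rw [h1, ← Complex.exp_add]
      simp
    have hD' := mem_su2 0 (Complex.exp (-(I*(θ:ℂ)))) huv'
    have hDeq : !![conj (Complex.exp (-(I*(θ:ℂ)))), -(conj (0:ℂ)); (0:ℂ),
        Complex.exp (-(I*(θ:ℂ)))] = !![Complex.exp (I*(θ:ℂ)), 0; 0, Complex.exp (-(I*(θ:ℂ)))] := by
      rw [h1]
      simp
    rwa [hDeq] at hD'
  refine ⟨!![Complex.exp (I*(θ:ℂ)), 0; 0, Complex.exp (-(I*(θ:ℂ)))] * !![conj v, -(conj u); u, v],
    mul_mem hD hX0, γ, ‖e0‖, ‖e2‖, Complex.exp (I*((θ:ℂ)-(γ:ℂ)))*e1, ?_⟩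
  rw [tens3_mul, ← Matrix.mulVec_mulVec, key2, hroot]
  exact step2 θ γ _ _ _ hγ hB
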